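/- Let G be a multi r-edge-colored complete graph (transitive coloring) in which every edge has at least t colors, with t + 1 ≤ r ≤ 4t − 1, and suppose there exists an edge xy with t < |col(xy)| < r. Then V(G) can be covered by at most r − t monochromatic components. -/
import Mathlib


/-- Multi r-edge-colored complete graph, every edge with at least
t colors, t + 1 ≤ r ≤ 4t − 1, and some edge xy has t < |col(xy)| < r colors.
Then V(G) can be covered by at most r − t monochromatic components. -/
theorem stmt_4 {V : Type*} [Fintype V] [DecidableEq V] (r t : ℕ)
    (col : V → V → Finset (Fin r))
    (hsymm : ∀ u v : V, col u v = col v u)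
    (htrans : ∀ u v w : V, ∀ i : Fin r,
      i ∈ col u v → i ∈ col v w → u ≠ w → i ∈ col u w)
    (hcard : ∀ u v : V, u ≠ v → t ≤ (col u v).card)
    (hlow : t + 1 ≤ r) (hhigh : r ≤ 4 * t - 1)
    (x y : V) (hxy : x ≠ y)
    (hxylow : t < (col x y).card) (hxyhigh : (col x y).card < r) :
    ∃ S : Finset (V × Fin r), S.card ≤ r - t ∧
      ∀ u : V, ∃ p ∈ S, u = p.1 ∨ p.2 ∈ col u p.1 := by
  classical
  have ht1 : 1 ≤ t := by omega
  -- abbreviation for the cardinality of the special edge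
  have hCpos : 0 < (col x y).card := by omega
  -- transfer lemmas coming from transitivity
  have tUXY : ∀ u : V, u ≠ y → ∀ i, i ∈ col u x → i ∈ col x y → i ∈ col u y :=
    fun u hu i h1 h2 => htrans u x y i h1 h2 hu
  have tUYX : ∀ u : V, u ≠ x → ∀ i, i ∈ col u y → i ∈ col x y → i ∈ col u x := by
    intro u hu i h1 h2
    exact htrans u y x i h1 (by rwa [hsymm y x]) hu
  have tXUY : ∀ u : V, ∀ i, i ∈ col u x → i ∈ col u y → i ∈ col x y := by
    intro u i h1 h2
    exact htrans x u y i (by rwa [hsymm x u]) h2 hxy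
  rcases (show r ≤ (col x y).card + t ∨
      ((col x y).card + t < r ∧ r < (col x y).card + 2 * t) ∨
      (col x y).card + 2 * t ≤ r by omega) with hA | ⟨hB1, hB2⟩ | hCc
  · -- ===== Case A : r ≤ c + t.  Use r−t classes of y with colors inside col x y =====
    obtain ⟨C', hC'sub, hC'card⟩ :=
      Finset.exists_subset_card_eq (show r - t ≤ (col x y).card by omega)
    refine ⟨C'.image (fun i => (y, i)), ?_, ?_⟩
    · calc (C'.image (fun i => (y, i))).card ≤ C'.card := Finset.card_image_le
        _ ≤ r - t := by omega
    · intro u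
      have hC'ne : C'.Nonempty := Finset.card_pos.mp (by omega)
      by_cases huy : u = y
      · obtain ⟨i0, hi0⟩ := hC'ne
        exact ⟨(y, i0), Finset.mem_image_of_mem _ hi0, Or.inl huy⟩
      by_cases hcov : ∃ i ∈ col u y, i ∈ C'
      · obtain ⟨i, hi1, hi2⟩ := hcov
        exact ⟨(y, i), Finset.mem_image_of_mem _ hi2, Or.inr hi1⟩
      push_neg at hcov
      by_cases hux : u = x
      · exfalso
        obtain ⟨i0, hi0⟩ := hC'ne
        exact hcov i0 (by rw [hux]; exact hC'sub hi0) hi0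
      exfalso
      -- u is none of x, y and is not covered: derive a contradiction
      have hnx : ∀ i ∈ col u x, i ∉ C' := fun i hi hiC' =>
        hcov i (tUXY u huy i hi (hC'sub hiC')) hiC'
      have hsub : col u x ⊆ C'ᶜ := fun i hi => Finset.mem_compl.mpr (hnx i hi)
      have hcompl_card : (C'ᶜ : Finset (Fin r)).card = t := by
        rw [Finset.card_compl, Fintype.card_fin, hC'card]; omega
      have hEq : col u x = C'ᶜ :=
        Finset.eq_of_subset_of_card_le hsub (by rw [hcompl_card]; exact hcard u x hux)
      have hsub2 : col u y ⊆ (col x y) \ C' := by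
        intro i hi
        have hiC' : i ∉ C' := fun h => hcov i hi h
        have hiux : i ∈ col u x := by rw [hEq]; exact Finset.mem_compl.mpr hiC'
        exact Finset.mem_sdiff.mpr ⟨tXUY u i hiux hi, hiC'⟩
      have h1 := Finset.card_le_card hsub2
      rw [Finset.card_sdiff_of_subset hC'sub, hC'card] at h1
      have h2 := hcard u y huy
      omega
  · -- ===== Case B : c + t < r < c + 2t.  Use col x y at y and a pad I at x =====
    obtain ⟨I, hIsub, hIcard⟩ :=
      Finset.exists_subset_card_eq
        (show r - t - (col x y).card ≤ ((col x y)ᶜ : Finset (Fin r)).card by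
          rw [Finset.card_compl, Fintype.card_fin]; omega)
    refine ⟨(col x y).image (fun i => (y, i)) ∪ I.image (fun i => (x, i)), ?_, ?_⟩
    · calc ((col x y).image (fun i => (y, i)) ∪ I.image (fun i => (x, i))).card
          ≤ ((col x y).image (fun i => (y, i))).card + (I.image (fun i => (x, i))).card :=
            Finset.card_union_le _ _
        _ ≤ (col x y).card + I.card :=
            Nat.add_le_add Finset.card_image_le Finset.card_image_le
        _ ≤ r - t := by omega
    · intro u
      have hCne : (col x y).Nonempty := Finset.card_pos.mp hCpos
      by_cases huy : u = y
      · obtain ⟨i0, hi0⟩ := hCne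
        exact ⟨(y, i0), Finset.mem_union_left _ (Finset.mem_image_of_mem _ hi0), Or.inl huy⟩
      by_cases hcovy : ∃ i ∈ col u y, i ∈ col x y
      · obtain ⟨i, hi1, hi2⟩ := hcovy
        exact ⟨(y, i), Finset.mem_union_left _ (Finset.mem_image_of_mem _ hi2), Or.inr hi1⟩
      by_cases hcovx : ∃ i ∈ col u x, i ∈ I
      · obtain ⟨i, hi1, hi2⟩ := hcovx
        exact ⟨(x, i), Finset.mem_union_right _ (Finset.mem_image_of_mem _ hi2), Or.inr hi1⟩
      push_neg at hcovy hcovx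
      by_cases hux : u = x
      · exfalso
        obtain ⟨i0, hi0⟩ := hCne
        exact hcovy i0 (by rw [hux]; exact hi0) hi0
      exfalso
      have hnxC : ∀ i ∈ col u x, i ∉ col x y := fun i hi hiC =>
        hcovy i (tUXY u huy i hi hiC) hiC
      have hsub : col u x ⊆ (col x y ∪ I)ᶜ := by
        intro i hi
        refine Finset.mem_compl.mpr ?_
        intro hmem
        rcases Finset.mem_union.mp hmem with h | h
        · exact hnxC i hi h
        · exact hcovx i hi h
      have hdisj : Disjoint (col x y) I :=
        Finset.disjoint_left.mpr fun i hiC hiI => (Finset.mem_compl.mp (hIsub hiI)) hiC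
      have hUcard : ((col x y ∪ I)ᶜ : Finset (Fin r)).card = t := by
        rw [Finset.card_compl, Fintype.card_fin, Finset.card_union_of_disjoint hdisj, hIcard]
        omega
      have hEq : col u x = (col x y ∪ I)ᶜ :=
        Finset.eq_of_subset_of_card_le hsub (by rw [hUcard]; exact hcard u x hux)
      have hsub2 : col u y ⊆ I := by
        intro i hi
        have hiC : i ∉ col x y := fun h => hcovy i hi h
        have hiux : i ∉ col u x := fun h => hiC (tXUY u i h hi)
        have : i ∈ col x y ∪ I := by
          by_contra h
          exact hiux (by rw [hEq]; exact Finset.mem_compl.mpr h)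
        exact (Finset.mem_union.mp this).resolve_left hiC
      have h1 := Finset.card_le_card hsub2
      have h2 := hcard u y huy
      omega
  · -- ===== Case C : c + 2t ≤ r.  Use (col x y ∪ B1) at x and J ⊆ B1 at y =====
    obtain ⟨B1, hB1sub, hB1card⟩ :=
      Finset.exists_subset_card_eq
        (show t - 1 ≤ ((col x y)ᶜ : Finset (Fin r)).card by
          rw [Finset.card_compl, Fintype.card_fin]; omega)
    obtain ⟨J, hJsub, hJcard⟩ :=
      Finset.exists_subset_card_eq
        (show r + 1 - 2 * t - (col x y).card ≤ B1.card by rw [hB1card]; omega)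
    refine ⟨((col x y ∪ B1).image (fun i => (x, i))) ∪ J.image (fun i => (y, i)), ?_, ?_⟩
    · calc (((col x y ∪ B1).image (fun i => (x, i))) ∪ J.image (fun i => (y, i))).card
          ≤ ((col x y ∪ B1).image (fun i => (x, i))).card + (J.image (fun i => (y, i))).card :=
            Finset.card_union_le _ _
        _ ≤ (col x y ∪ B1).card + J.card :=
            Nat.add_le_add Finset.card_image_le Finset.card_image_le
        _ ≤ ((col x y).card + B1.card) + J.card :=
            Nat.add_le_add_right (Finset.card_union_le _ _) _
        _ ≤ r - t := by omega
    · intro u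
      have hCne : (col x y).Nonempty := Finset.card_pos.mp hCpos
      have hJne : J.Nonempty := Finset.card_pos.mp (by omega)
      by_cases hux : u = x
      · obtain ⟨i0, hi0⟩ := hCne
        exact ⟨(x, i0),
          Finset.mem_union_left _ (Finset.mem_image_of_mem _ (Finset.mem_union_left _ hi0)),
          Or.inl hux⟩
      by_cases hcovx : ∃ i ∈ col u x, i ∈ col x y ∪ B1
      · obtain ⟨i, hi1, hi2⟩ := hcovx
        exact ⟨(x, i), Finset.mem_union_left _ (Finset.mem_image_of_mem _ hi2), Or.inr hi1⟩
      by_cases hcovy : ∃ i ∈ col u y, i ∈ J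
      · obtain ⟨i, hi1, hi2⟩ := hcovy
        exact ⟨(y, i), Finset.mem_union_right _ (Finset.mem_image_of_mem _ hi2), Or.inr hi1⟩
      push_neg at hcovx hcovy
      by_cases huy : u = y
      · exfalso
        obtain ⟨i0, hi0⟩ := hCne
        have : i0 ∈ col u x := by rw [huy, hsymm y x]; exact hi0
        exact hcovx i0 this (Finset.mem_union_left _ hi0)
      exfalso
      have hdisj : Disjoint (col x y) B1 :=
        Finset.disjoint_left.mpr fun i hiC hiB => (Finset.mem_compl.mp (hB1sub hiB)) hiC
      have hPcard : (col x y ∪ B1).card = (col x y).card + (t - 1) := by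
        rw [Finset.card_union_of_disjoint hdisj, hB1card]
      have hsubO : col u x ⊆ (col x y ∪ B1)ᶜ := fun i hi =>
        Finset.mem_compl.mpr (hcovx i hi)
      have hOcard : ((col x y ∪ B1)ᶜ : Finset (Fin r)).card
          = r - ((col x y).card + (t - 1)) := by
        rw [Finset.card_compl, Fintype.card_fin, hPcard]
      -- the key inclusion for col u y
      have hsub2 : col u y ⊆ (B1 \ J) ∪ (((col x y ∪ B1)ᶜ) \ col u x) := by
        intro i hi
        have hiJ : i ∉ J := hcovy i hi
        have hiC : i ∉ col x y := by
          intro hiC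
          exact hcovx i (tUYX u hux i hi hiC) (Finset.mem_union_left _ hiC)
        by_cases hiB : i ∈ B1
        · exact Finset.mem_union_left _ (Finset.mem_sdiff.mpr ⟨hiB, hiJ⟩)
        · have hiP : i ∉ col x y ∪ B1 := by
            intro h
            rcases Finset.mem_union.mp h with h' | h'
            · exact hiC h'
            · exact hiB h'
          have hiux : i ∉ col u x := fun h => hiC (tXUY u i h hi)
          exact Finset.mem_union_right _
            (Finset.mem_sdiff.mpr ⟨Finset.mem_compl.mpr hiP, hiux⟩)
      -- cardinality bookkeeping
      have h1 := Finset.card_le_card hsub2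
      have h2 : ((B1 \ J) ∪ (((col x y ∪ B1)ᶜ) \ col u x)).card
          ≤ (B1 \ J).card + ((((col x y ∪ B1)ᶜ)) \ col u x).card :=
        Finset.card_union_le _ _
      have h3 : (B1 \ J).card = B1.card - J.card := Finset.card_sdiff_of_subset hJsub
      have h4 : ((((col x y ∪ B1)ᶜ)) \ col u x).card
          = ((col x y ∪ B1)ᶜ : Finset (Fin r)).card - (col u x).card :=
        Finset.card_sdiff_of_subset hsubO
      have h5 := Finset.card_le_card hsubO
      have h6 := hcard u x hux
      have h7 := hcard u y huy
      omega
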